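/- arXiv:1812.10843 — 3 statements merged into one kernel-verified Lean document; each statement's English description precedes it below -/
import Mathlib

section
/- Let a > 0 and let d ≥ e ≥ 0 be real numbers. For the rank-1 diffusion tensor D = diag(a,0,0), the orientationally-averaged signals for rank-2 measurement tensors satisfy S̄(diag(a,0,0), diag(d,d,0)) ≤ S̄(diag(a,0,0), diag(d,e,0)) ≤ S̄(diag(a,0,0), diag(e,e,0)). -/
open Matrix MeasureTheory

noncomputable section

abbrev Mat3 := Matrix (Fin 3) (Fin 3) ℝ

/-- The special orthogonal group SO(3) as a submonoid of 3×3 real matrices: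
matrices `R` with `Rᵀ * R = 1` and `det R = 1`. -/
def SO3 : Submonoid Mat3 where
  carrier := {R | Rᵀ * R = 1 ∧ R.det = 1}
  one_mem' := ⟨by simp, by simp⟩
  mul_mem' := by
    rintro A B ⟨hA1, hA2⟩ ⟨hB1, hB2⟩
    refine ⟨?_, by rw [Matrix.det_mul, hA2, hB2, one_mul]⟩
    rw [Matrix.transpose_mul, Matrix.mul_assoc, ← Matrix.mul_assoc Aᵀ, hA1, Matrix.one_mul, hB1]

instance : Group SO3 :=
  { (inferInstance : Monoid SO3) with
    inv := fun A => ⟨A.1ᵀ, by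
      refine ⟨?_, by rw [Matrix.det_transpose]; exact A.2.2⟩
      rw [Matrix.transpose_transpose, mul_eq_one_comm]
      exact A.2.1⟩
    inv_mul_cancel := fun A => Subtype.ext A.2.1 }

instance : IsTopologicalGroup SO3 where
  continuous_mul := Continuous.subtype_mk
    (((continuous_subtype_val.comp continuous_fst).matrix_mul
      (continuous_subtype_val.comp continuous_snd))) _
  continuous_inv := Continuous.subtype_mk continuous_subtype_val.matrix_transpose _

theorem SO3_isCompact : IsCompact (SO3 : Set Mat3) := by
  have hsub : (SO3 : Set Mat3) ⊆
      Set.univ.pi (fun _ : Fin 3 => Set.univ.pi fun _ : Fin 3 => Set.Icc (-1:ℝ) 1) := by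
    rintro R ⟨hR1, -⟩
    refine Set.mem_univ_pi.mpr fun i => Set.mem_univ_pi.mpr fun j => ?_
    have h1 : (Rᵀ * R) j j = (1 : Mat3) j j := by rw [hR1]
    have h2 : ∑ k, R k j ^ 2 = 1 := by
      simpa [Matrix.mul_apply, Matrix.transpose_apply, Matrix.one_apply, sq] using h1
    have h3 : R i j ^ 2 ≤ 1 := by
      rw [← h2]
      exact Finset.single_le_sum (fun k _ => sq_nonneg (R k j)) (Finset.mem_univ i)
    exact Set.mem_Icc.mpr (abs_le.mp ((sq_le_one_iff_abs_le_one (a := R i j)).mp h3))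
  exact IsCompact.of_isClosed_subset
    (isCompact_univ_pi fun _ => isCompact_univ_pi fun _ => isCompact_Icc)
    (IsClosed.inter
      (isClosed_singleton.preimage (continuous_id.matrix_transpose.matrix_mul continuous_id))
      (isClosed_singleton.preimage continuous_id.matrix_det))
    hsub

instance : CompactSpace SO3 := isCompact_iff_compactSpace.mp SO3_isCompact

instance : MeasurableSpace SO3 := borel _
instance : BorelSpace SO3 := ⟨rfl⟩

/-- The Haar probability measure on the compact group SO(3)
(normalized so that the whole group has measure 1). -/
def μSO3 : Measure SO3 := Measure.haarMeasure ⊤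

/-- The orientationally-averaged signal
`S̄(D,B) = ∫_{SO(3)} exp(−tr(D·R·B·Rᵀ)) dμ(R)`. -/
def Sbar (D B : Mat3) : ℝ :=
  ∫ R : SO3, Real.exp (-(D * R.1 * B * R.1ᵀ).trace) ∂μSO3

/-- `dg a b c` is the diagonal 3×3 matrix with diagonal entries `a`, `b`, `c`. -/
def dg (x y z : ℝ) : Mat3 := Matrix.diagonal ![x, y, z]

/-- The error function `erf x = (2/√π) ∫₀ˣ exp(−t²) dt`. -/
def erf (x : ℝ) : ℝ := (2 / Real.sqrt Real.pi) * ∫ t in (0:ℝ)..x, Real.exp (-t^2)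

/-- The rising factorial (Pochhammer symbol) `(q)ₖ = q(q+1)⋯(q+k−1)`. -/
def poch (q : ℝ) (k : ℕ) : ℝ := (ascPochhammer ℝ k).eval q

/-- The Gauss hypergeometric polynomial `₂F₁(1/2, −n; 1; x) = ∑_{k=0}^n ((1/2)ₖ(−n)ₖ/((1)ₖ k!)) xᵏ`. -/
def F21half (n : ℕ) (x : ℝ) : ℝ :=
  ∑ k ∈ Finset.range (n+1),
    (poch (1/2) k * poch (-(n:ℝ)) k) / (poch 1 k * (Nat.factorial k)) * x^k

/-- The confluent hypergeometric function `₁F₁(α; β; x) = ∑ₖ ((α)ₖ/(β)ₖ) xᵏ/k!`. -/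
def F11 (α β x : ℝ) : ℝ := ∑' k : ℕ, (poch α k / poch β k) * x^k / (Nat.factorial k)

/-- The modified Bessel function of the first kind of integer order `m`:
`I_m(x) = ∑ⱼ (x/2)^{m+2j}/(j!(m+j)!)`. -/
def besselI (m : ℕ) (x : ℝ) : ℝ :=
  ∑' j : ℕ, (x/2)^(m+2*j) / ((Nat.factorial j) * (Nat.factorial (m+j)))

/-- The regularized Gauss hypergeometric function
`₂F̃₁(α, β; γ; x) = ∑ₖ (α)ₖ(β)ₖ xᵏ/(Γ(γ+k) k!)`, with `1/Γ` vanishing at nonpositive integers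
(note `Real.Gamma` is defined to be `0` there, and `x/0 = 0` in Lean). -/
def regF21 (α β γ x : ℝ) : ℝ :=
  ∑' k : ℕ, (poch α k * poch β k) * x^k / (Real.Gamma (γ + k) * (Nat.factorial k))

end

lemma trace_dg (a d e : ℝ) (R : Mat3) :
    (dg a 0 0 * R * dg d e 0 * Rᵀ).trace = a * (d * (R 0 0)^2 + e * (R 0 1)^2) := by
  simp [dg, Matrix.trace, Matrix.diag, Matrix.mul_apply, Matrix.diagonal, Fin.sum_univ_three]
  ring

lemma Sbar_mono (a d e d' e' : ℝ) (hd : d' ≤ d) (he : e' ≤ e) (ha : 0 ≤ a) :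
    Sbar (dg a 0 0) (dg d e 0) ≤ Sbar (dg a 0 0) (dg d' e' 0) := by
  unfold Sbar
  haveI : IsProbabilityMeasure μSO3 := by
    constructor
    have := Measure.haarMeasure_self (K₀ := (⊤ : TopologicalSpace.PositiveCompacts SO3))
    simpa [μSO3] using this
  have hint : ∀ x y : ℝ, Integrable (fun R : SO3 =>
      Real.exp (-(dg a 0 0 * R.1 * dg x y 0 * R.1ᵀ).trace)) μSO3 := by
    intro x y
    apply Continuous.integrable_of_hasCompactSupport
    · exact Real.continuous_exp.comp (Continuous.matrix_trace (((continuous_const.matrix_mul continuous_subtype_val).matrix_mul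
        continuous_const).matrix_mul continuous_subtype_val.matrix_transpose)).neg
    · exact HasCompactSupport.of_compactSpace _
  refine integral_mono (hint d e) (hint d' e') fun R => ?_
  rw [trace_dg, trace_dg]
  apply Real.exp_le_exp.mpr
  have h1 := sq_nonneg (R.1 0 0)
  have h2 := sq_nonneg (R.1 0 1)
  nlinarith [mul_le_mul_of_nonneg_right hd h1, mul_le_mul_of_nonneg_right he h2]

/-- two-sided bound for a stick `D = diag(a,0,0)` and rank-2 measurement tensors. -/
theorem stmt_11 (a d e : ℝ) (ha : 0 < a) (hed : e ≤ d) (he : 0 ≤ e) :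
    Sbar (dg a 0 0) (dg d d 0) ≤ Sbar (dg a 0 0) (dg d e 0) ∧
      Sbar (dg a 0 0) (dg d e 0) ≤ Sbar (dg a 0 0) (dg e e 0) := by
  exact ⟨Sbar_mono a d d d e le_rfl hed ha.le, Sbar_mono a d e e e hed le_rfl ha.le⟩
end

section
/- Let a ≥ b ≥ c > 0 and set D = diag(a,b,c). Then the orientationally-averaged signal for the rank-1 measurement tensors diag(d,0,0) decays exponentially with rate given by the smallest eigenvalue of D: lim_{d → ∞} −(1/d)·log( S̄(D, diag(d,0,0)) ) = c. -/
open Matrix MeasureTheory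

noncomputable section AuxStmt13

open Filter

/-- auxiliary: the exponent function. -/
def gfun (a b c : ℝ) (R : SO3) : ℝ :=
  a * (R.1 0 0)^2 + b * (R.1 1 0)^2 + c * (R.1 2 0)^2

lemma gfun_continuous (a b c : ℝ) : Continuous (gfun a b c) := by
  have h : ∀ i j : Fin 3, Continuous fun R : SO3 => R.1 i j := fun i j =>
    (continuous_subtype_val.matrix_elem i j)
  exact ((continuous_const.mul ((h 0 0).pow 2)).add
    (continuous_const.mul ((h 1 0).pow 2))).add (continuous_const.mul ((h 2 0).pow 2))

lemma trace_eq_gfun (a b c d : ℝ) (R : SO3) :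
    (dg a b c * R.1 * dg d 0 0 * R.1ᵀ).trace = d * gfun a b c R := by
  simp [dg, gfun, Matrix.trace, Matrix.mul_apply, Matrix.diagonal_apply, Fin.sum_univ_three,
    Matrix.transpose_apply]
  ring

lemma col_norm (R : SO3) : (R.1 0 0)^2 + (R.1 1 0)^2 + (R.1 2 0)^2 = 1 := by
  have := congrFun (congrFun R.2.1 0) 0
  simpa [Matrix.mul_apply, Fin.sum_univ_three, Matrix.transpose_apply, Matrix.one_apply, sq]
    using this

lemma gfun_ge (a b c : ℝ) (hba : b ≤ a) (hcb : c ≤ b) (R : SO3) : c ≤ gfun a b c R := by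
  have h := col_norm R
  have hca : c ≤ a := hcb.trans hba
  unfold gfun
  have e : c * ((R.1 0 0)^2 + (R.1 1 0)^2 + (R.1 2 0)^2) = c := by rw [h]; ring
  nlinarith [mul_nonneg (sub_nonneg.2 hca) (sq_nonneg (R.1 0 0)),
    mul_nonneg (sub_nonneg.2 hcb) (sq_nonneg (R.1 1 0)), e]

def Rzero : SO3 := ⟨!![0,1,0;0,0,1;1,0,0], by
  constructor
  · ext i j
    fin_cases i <;> fin_cases j <;>
      simp [Matrix.mul_apply, Fin.sum_univ_three, Matrix.one_apply, Matrix.transpose,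
        Matrix.vecHead, Matrix.vecTail]
  · norm_num [Matrix.det_fin_three]
    exact one_mul (1:ℝ)⟩

lemma gfun_Rzero (a b c : ℝ) : gfun a b c Rzero = c := by
  simp [gfun, Rzero]

instance : IsProbabilityMeasure μSO3 := ⟨by
  rw [μSO3, ← TopologicalSpace.PositiveCompacts.coe_top (α := SO3)]
  exact Measure.haarMeasure_self⟩

instance : μSO3.IsOpenPosMeasure := by
  rw [μSO3]
  infer_instance

lemma integrable_exp_gfun (a b c d : ℝ) :
    Integrable (fun R : SO3 => Real.exp (-(d * gfun a b c R))) μSO3 := by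
  have hcont : Continuous fun R : SO3 => Real.exp (-(d * gfun a b c R)) :=
    Real.continuous_exp.comp (((continuous_const.mul (gfun_continuous a b c))).neg)
  have := (hcont.continuousOn).integrableOn_compact (μ := μSO3) isCompact_univ
  rwa [MeasureTheory.integrableOn_univ] at this

lemma Sbar_eq (a b c d : ℝ) :
    Sbar (dg a b c) (dg d 0 0) = ∫ R : SO3, Real.exp (-(d * gfun a b c R)) ∂μSO3 := by
  unfold Sbar
  congr 1
  ext R
  rw [trace_eq_gfun]

end AuxStmt13

/-- exponential decay rate of `S̄(diag(a,b,c), diag(d,0,0))` is the smallest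
eigenvalue `c`: `lim_{d→∞} −(1/d)·log S̄ = c`. -/
theorem stmt_13 (a b c : ℝ) (hba : b ≤ a) (hcb : c ≤ b) (hc : 0 < c) :
    Filter.Tendsto (fun d : ℝ => -(1/d) * Real.log (Sbar (dg a b c) (dg d 0 0)))
      Filter.atTop (nhds c) := by
  rw [Metric.tendsto_atTop]
  intro ε hε
  -- the open set where gfun < c + ε/2 has positive measure
  have hU_open : IsOpen {R : SO3 | gfun a b c R < c + ε/2} :=
    isOpen_lt (gfun_continuous a b c) continuous_const
  have hU_ne : Rzero ∈ {R : SO3 | gfun a b c R < c + ε/2} := by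
    simp only [Set.mem_setOf_eq, gfun_Rzero]
    linarith
  have hμU : 0 < μSO3 {R : SO3 | gfun a b c R < c + ε/2} :=
    hU_open.measure_pos μSO3 ⟨Rzero, hU_ne⟩
  set m : ℝ := (μSO3 {R : SO3 | gfun a b c R < c + ε/2}).toReal with hm_def
  have hm : 0 < m := ENNReal.toReal_pos hμU.ne' (measure_ne_top _ _)
  set L : ℝ := |Real.log m| with hL_def
  have hL : 0 ≤ L := abs_nonneg _
  refine ⟨max 1 (1 + 2*L/ε), fun d hd => ?_⟩
  have hd1 : (1:ℝ) ≤ d := le_trans (le_max_left _ _) hd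
  have hd0 : (0:ℝ) < d := lt_of_lt_of_le one_pos hd1
  have hdL : 1 + 2*L/ε ≤ d := le_trans (le_max_right _ _) hd
  set S : ℝ := Sbar (dg a b c) (dg d 0 0) with hS_def
  -- upper bound on S
  have hub : S ≤ Real.exp (-(d*c)) := by
    rw [hS_def, Sbar_eq]
    calc ∫ R : SO3, Real.exp (-(d * gfun a b c R)) ∂μSO3
        ≤ ∫ _ : SO3, Real.exp (-(d*c)) ∂μSO3 := by
          refine integral_mono (integrable_exp_gfun a b c d) (integrable_const _) fun R => ?_
          exact Real.exp_le_exp.2 (neg_le_neg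
            (mul_le_mul_of_nonneg_left (gfun_ge a b c hba hcb R) hd0.le))
      _ = Real.exp (-(d*c)) := by simp
  -- lower bound on S
  have hlb : m * Real.exp (-(d*(c+ε/2))) ≤ S := by
    rw [hS_def, Sbar_eq]
    have hptwise : ∀ R : SO3,
        Set.indicator {R : SO3 | gfun a b c R < c + ε/2}
          (fun _ => Real.exp (-(d*(c+ε/2)))) R ≤ Real.exp (-(d * gfun a b c R)) := by
      intro R
      by_cases hR : R ∈ {R : SO3 | gfun a b c R < c + ε/2}
      · rw [Set.indicator_of_mem hR]
        exact Real.exp_le_exp.2 (neg_le_neg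
          (mul_le_mul_of_nonneg_left (le_of_lt hR) hd0.le))
      · rw [Set.indicator_of_notMem hR]
        exact (Real.exp_pos _).le
    calc m * Real.exp (-(d*(c+ε/2)))
        = ∫ R : SO3, Set.indicator {R : SO3 | gfun a b c R < c + ε/2}
            (fun _ => Real.exp (-(d*(c+ε/2)))) R ∂μSO3 := by
          rw [MeasureTheory.integral_indicator_const _ hU_open.measurableSet]
          simp [hm_def, smul_eq_mul, mul_comm, Measure.real]
      _ ≤ ∫ R : SO3, Real.exp (-(d * gfun a b c R)) ∂μSO3 :=
          integral_mono ((integrable_const _).indicator hU_open.measurableSet)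
            (integrable_exp_gfun a b c d) hptwise
  have hSpos : 0 < S := lt_of_lt_of_le (by positivity) hlb
  -- log bounds
  have hlog_ub : Real.log S ≤ -(d*c) := by
    have := Real.log_le_log hSpos hub
    rwa [Real.log_exp] at this
  have hlog_lb : Real.log m + -(d*(c+ε/2)) ≤ Real.log S := by
    have := Real.log_le_log (by positivity) hlb
    rwa [Real.log_mul hm.ne' (Real.exp_ne_zero _), Real.log_exp] at this
  have hdd : (1/d) * d = 1 := by field_simp
  -- f d ≥ c
  have h1 : c ≤ -(1/d) * Real.log S := by
    have h := mul_le_mul_of_nonneg_left hlog_ub (by positivity : (0:ℝ) ≤ 1/d)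
    have he : (1/d) * (-(d*c)) = -c := by field_simp
    rw [he] at h
    linarith
  -- f d ≤ c + ε/2 + L/d
  have h2 : -(1/d) * Real.log S ≤ c + ε/2 + L/d := by
    have h := mul_le_mul_of_nonneg_left hlog_lb (by positivity : (0:ℝ) ≤ 1/d)
    have habs : -Real.log m ≤ L := neg_le_abs _
    have he : (1/d) * (Real.log m + -(d*(c+ε/2))) = Real.log m / d - (c+ε/2) := by
      field_simp
      ring
    rw [he] at h
    have hnd : (-Real.log m)/d = -(Real.log m / d) := neg_div _ _
    have h3 : (-Real.log m)/d ≤ L/d := (div_le_div_iff_of_pos_right hd0).2 habs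
    rw [hnd] at h3
    linarith
  have hLd : L/d < ε/2 := by
    rw [div_lt_iff₀ hd0]
    have hmul : (1 + 2*L/ε) * ε ≤ d * ε := mul_le_mul_of_nonneg_right hdL (le_of_lt hε)
    have hcancel : (2*L/ε) * ε = 2*L := by field_simp
    nlinarith
  rw [Real.dist_eq, abs_of_nonneg (by linarith)]
  linarith
end

section
/- Fix d > 0 and for a real symmetric 3×3 matrix D define c₁(D) = −(d/3)·tr(D), c₂(D) = (d²/30)·(tr(D)² + 2·tr(D²)), and c₃(D) = −(d³/630)·(tr(D)³ + 6·tr(D²)·tr(D) + 8·tr(D³)) (these are the first three Taylor coefficients at λ = 0 of λ ↦ S̄(D, λ·diag(d,0,0))). If D₁ and D₂ are real symmetric positive semi-definite 3×3 matrices with c₁(D₁) = c₁(D₂), c₂(D₁) = c₂(D₂) and c₃(D₁) = c₃(D₂), then D₁ and D₂ have the same characteristic polynomial, i.e. the same eigenvalues with multiplicity. -/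
open Matrix MeasureTheory

open Polynomial

theorem charpoly_fin_three (M : Matrix (Fin 3) (Fin 3) ℝ) :
    M.charpoly = X^3 - C M.trace * X^2 + C ((M.trace^2 - (M*M).trace)/2) * X
      - C ((M.trace^3 - 3*(M*M).trace*M.trace + 2*(M*M*M).trace)/6) := by
  have e2 : ((M.trace)^2 - (M*M).trace)/2 =
      M 0 0*M 1 1 + M 0 0*M 2 2 + M 1 1*M 2 2 - M 0 1*M 1 0 - M 0 2*M 2 0 - M 1 2*M 2 1 := by
    simp [Matrix.trace_fin_three, Matrix.mul_apply, Fin.sum_univ_three]; ring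
  have e3 : ((M.trace)^3 - 3*(M*M).trace*M.trace + 2*(M*M*M).trace)/6 =
      M 0 0*M 1 1*M 2 2 - M 0 0*M 1 2*M 2 1 - M 0 1*M 1 0*M 2 2 + M 0 1*M 1 2*M 2 0
        + M 0 2*M 1 0*M 2 1 - M 0 2*M 1 1*M 2 0 := by
    simp [Matrix.trace_fin_three, Matrix.mul_apply, Fin.sum_univ_three]; ring
  rw [e2, e3, Matrix.charpoly, Matrix.det_fin_three]
  simp [charmatrix_apply, Matrix.trace_fin_three, diagonal_apply, Matrix.one_apply]
  ring


/-- the first three Taylor coefficients of `λ ↦ S̄(D, λ·diag(d,0,0))` determine a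
positive semi-definite `D` up to its characteristic polynomial (eigenvalues with multiplicity). -/
theorem stmt_15 (d : ℝ) (hd : 0 < d) (D₁ D₂ : Mat3)
    (h₁ : D₁.PosSemidef) (h₂ : D₂.PosSemidef)
    (hc1 : -(d/3) * D₁.trace = -(d/3) * D₂.trace)
    (hc2 : (d^2/30) * (D₁.trace^2 + 2 * (D₁*D₁).trace) =
           (d^2/30) * (D₂.trace^2 + 2 * (D₂*D₂).trace))
    (hc3 : -(d^3/630) * (D₁.trace^3 + 6 * (D₁*D₁).trace * D₁.trace + 8 * (D₁*D₁*D₁).trace) =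
           -(d^3/630) * (D₂.trace^3 + 6 * (D₂*D₂).trace * D₂.trace + 8 * (D₂*D₂*D₂).trace)) :
    D₁.charpoly = D₂.charpoly := by
  have t1 : D₁.trace = D₂.trace :=
    mul_left_cancel₀ (show -(d/3) ≠ 0 by simp; linarith) hc1
  have t2 : (D₁*D₁).trace = (D₂*D₂).trace := by
    have h := mul_left_cancel₀ (show (d^2/30:ℝ) ≠ 0 by positivity) hc2
    rw [t1] at h; linarith
  have t3 : (D₁*D₁*D₁).trace = (D₂*D₂*D₂).trace := by
    have h := mul_left_cancel₀ (show -(d^3/630) ≠ 0 by simp; positivity) hc3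
    rw [t1, t2] at h; linarith
  rw [charpoly_fin_three, charpoly_fin_three, t1, t2, t3]
end
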